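/- Let M = {D₁, …, D_{d+1}} be d+1 closed balls in ℝᵈ such that every pair intersects and every d of them have nonempty intersection, but ⋂ⱼ₌₁^{d+1} Dⱼ = ∅. Then there exists a coordinate i ∈ {1, …, d} such that max over j of inf{π_i(x) : x ∈ ⋂_{k≠j} D_k} > min over j of sup{π_i(x) : x ∈ ⋂_{k≠j} D_k}. -/

import Mathlib

open Metric EuclideanSpace
open Module

/-- If `d + 1` closed balls in `ℝᵈ` pairwise intersect and every `d` of them have a
common point, but the total intersection is empty, then in some coordinate the
intersection of the bounding boxes `AABB(M \ {Dⱼ})` is an inverted interval. -/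
theorem stmt_16 {d : ℕ} (c : Fin (d + 1) → EuclideanSpace ℝ (Fin d))
    (r : Fin (d + 1) → ℝ) (hr : ∀ j, 0 < r j)
    (hpair : ∀ j k, (closedBall (c j) (r j) ∩ closedBall (c k) (r k)).Nonempty)
    (hpart : ∀ j, (⋂ k, ⋂ (_ : k ≠ j), closedBall (c k) (r k)).Nonempty)
    (hempty : (⋂ j, closedBall (c j) (r j)) = ∅) :
    ∃ i : Fin d,
      (⨅ j, sSup ((fun x => x i) '' ⋂ k, ⋂ (_ : k ≠ j), closedBall (c k) (r k))) <
        ⨆ j, sInf ((fun x => x i) '' ⋂ k, ⋂ (_ : k ≠ j), closedBall (c k) (r k)) := by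
  rcases Nat.eq_zero_or_pos d with hd | hd
  · subst hd
    exfalso
    have hc : c 0 ∈ ⋂ j, closedBall (c j) (r j) := by
      refine Set.mem_iInter.2 fun j => ?_
      have hcc : c 0 = c j := PiLp.ext fun i => i.elim0
      rw [hcc]
      exact mem_closedBall_self (hr j).le
    rw [hempty] at hc
    exact hc
  by_contra hcon
  push_neg at hcon
  set i0 : Fin d := ⟨0, hd⟩ with hi0
  set S : Fin (d + 1) → Set (EuclideanSpace ℝ (Fin d)) :=
    fun j => ⋂ k, ⋂ (_ : k ≠ j), closedBall (c k) (r k) with hS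
  set A : Fin (d + 1) → Set ℝ := fun j => (fun x => x i0) '' S j with hA
  have hg : Continuous fun x : EuclideanSpace ℝ (Fin d) => x i0 :=
    (EuclideanSpace.proj (𝕜 := ℝ) i0).continuous
  -- basic facts about S j
  have hSne : ∀ j, (S j).Nonempty := hpart
  have hSconv : ∀ j, Convex ℝ (S j) := fun j =>
    convex_iInter fun k => convex_iInter fun _ => convex_closedBall _ _
  have hScomp : ∀ j, IsCompact (S j) := by
    intro j
    have hcl : IsClosed (S j) :=
      isClosed_iInter fun k => isClosed_iInter fun _ => isClosed_closedBall
    obtain ⟨k1, hk1⟩ : ∃ k1 : Fin (d + 1), k1 ≠ j := by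
      rcases eq_or_ne j ⟨0, by omega⟩ with h | h
      · exact ⟨⟨1, by omega⟩, by rw [h]; simp [Fin.ext_iff]⟩
      · exact ⟨⟨0, by omega⟩, fun h' => h h'.symm⟩
    have hsub : S j ⊆ closedBall (c k1) (r k1) := by
      intro x hx
      exact Set.mem_iInter₂.1 hx k1 hk1
    exact (isCompact_closedBall _ _).of_isClosed_subset hcl hsub
  have hAne : ∀ j, (A j).Nonempty := fun j => (hSne j).image _
  have hAcomp : ∀ j, IsCompact (A j) := fun j => (hScomp j).image hg
  -- choose p0 in all the intervals
  set p0 : ℝ := ⨆ j, sInf (A j) with hp0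
  have hble : ∀ j, sInf (A j) ≤ p0 := by
    intro j
    rw [hp0]
    exact le_ciSup (Set.Finite.bddAbove (Set.finite_range fun j => sInf (A j))) j
  have hble2 : ∀ j, p0 ≤ sSup (A j) := by
    intro j
    rw [hp0]
    refine le_trans ?_ (ciInf_le (Set.Finite.bddBelow (Set.finite_range fun j => sSup (A j))) j)
    exact hcon i0
  -- for each j, find a point of S j on the hyperplane x i0 = p0
  have hx : ∀ j, ∃ x ∈ S j, x i0 = p0 := by
    intro j
    have hpre : IsPreconnected (A j) :=
      ((hSconv j).isPreconnected).image _ hg.continuousOn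
    have hmem : p0 ∈ A j := by
      refine hpre.Icc_subset ((hAcomp j).sInf_mem (hAne j))
        ((hAcomp j).sSup_mem (hAne j)) ⟨hble j, hble2 j⟩
    obtain ⟨x, hxS, hxg⟩ := hmem
    exact ⟨x, hxS, hxg⟩
  -- set up the hyperplane as a linear subspace
  set φ : EuclideanSpace ℝ (Fin d) →ₗ[ℝ] ℝ :=
    (EuclideanSpace.proj (𝕜 := ℝ) i0).toLinearMap with hφ
  set W := LinearMap.ker φ with hW
  have hWrank : finrank ℝ W = d - 1 := by
    rw [hW]
    have h := LinearMap.finrank_range_add_finrank_ker φ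
    have hsurj : LinearMap.range φ = ⊤ := by
      rw [LinearMap.range_eq_top]
      intro x
      exact ⟨EuclideanSpace.single i0 x, by simp [hφ]⟩
    rw [hsurj, finrank_top, finrank_self] at h
    rw [finrank_euclideanSpace_fin] at h
    omega
  set v : EuclideanSpace ℝ (Fin d) := EuclideanSpace.single i0 p0 with hv
  have hvp : v i0 = p0 := by simp [hv]
  set U : Fin (d + 1) → Set W :=
    fun k => {w : W | v + (w : EuclideanSpace ℝ (Fin d)) ∈ closedBall (c k) (r k)} with hU
  have hUconv : ∀ k ∈ (Finset.univ : Finset (Fin (d + 1))), Convex ℝ (U k) := by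
    intro k _
    intro w1 hw1 w2 hw2 a b ha hb hab
    have hw1' : v + (w1 : EuclideanSpace ℝ (Fin d)) ∈ closedBall (c k) (r k) := hw1
    have hw2' : v + (w2 : EuclideanSpace ℝ (Fin d)) ∈ closedBall (c k) (r k) := hw2
    have hballs := (convex_closedBall (c k) (r k)) hw1' hw2' ha hb hab
    have h2 : v + ((a • w1 + b • w2 : W) : EuclideanSpace ℝ (Fin d)) =
        a • (v + (w1 : EuclideanSpace ℝ (Fin d))) + b • (v + (w2 : EuclideanSpace ℝ (Fin d))) := by
      simp only [Submodule.coe_add, Submodule.coe_smul]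
      rw [smul_add, smul_add]
      have hcombo : a • v + b • v = v := Convex.combo_self hab v
      rw [show a • v + a • (w1 : EuclideanSpace ℝ (Fin d)) +
          (b • v + b • (w2 : EuclideanSpace ℝ (Fin d))) =
          (a • v + b • v) + (a • (w1 : EuclideanSpace ℝ (Fin d)) +
            b • (w2 : EuclideanSpace ℝ (Fin d))) by abel, hcombo]
    show v + ((a • w1 + b • w2 : W) : EuclideanSpace ℝ (Fin d)) ∈ closedBall (c k) (r k)
    rw [h2]
    exact hballs
  have hHelly : (⋂ k ∈ (Finset.univ : Finset (Fin (d + 1))), U k).Nonempty := by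
    refine Convex.helly_theorem (𝕜 := ℝ) ?_ hUconv ?_
    · rw [hWrank]
      simp only [Finset.card_univ, Fintype.card_fin]
      omega
    · intro I hI hIcard
      rw [hWrank] at hIcard
      have hd1 : d - 1 + 1 = d := by omega
      rw [hd1] at hIcard
      -- the complement of I is a singleton
      have hcompl : Iᶜ.card = 1 := by
        have := Finset.card_compl I
        simp [hIcard] at this
        omega
      obtain ⟨j, hj⟩ := Finset.card_eq_one.1 hcompl
      have hkI : ∀ k ∈ I, k ≠ j := by
        intro k hk hkj
        have : k ∈ Iᶜ := by rw [hj]; simp [hkj]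
        exact (Finset.mem_compl.1 this) hk
      obtain ⟨x, hxS, hxg⟩ := hx j
      have hxW : x - v ∈ W := by
        rw [hW, LinearMap.mem_ker]
        have : φ (x - v) = φ x - φ v := map_sub _ _ _
        rw [this]
        have h1 : φ x = x i0 := rfl
        have h2 : φ v = v i0 := rfl
        rw [h1, h2, hxg, hvp, sub_self]
      refine ⟨⟨x - v, hxW⟩, ?_⟩
      rw [Set.mem_iInter₂]
      intro k hk
      show v + (x - v) ∈ closedBall (c k) (r k)
      rw [add_sub_cancel]
      exact Set.mem_iInter₂.1 hxS k (hkI k hk)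
  obtain ⟨w, hw⟩ := hHelly
  have hfin : v + (w : EuclideanSpace ℝ (Fin d)) ∈ ⋂ j, closedBall (c j) (r j) := by
    refine Set.mem_iInter.2 fun k => ?_
    exact Set.mem_iInter₂.1 hw k (Finset.mem_univ k)
  rw [hempty] at hfin
  exact hfin
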